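/- Let (E,z) be a semi-explicit gradient pair for H on X = X₁ × X₂, and write z = (z₁,z₂) with z₁ taking values in ℝ^{n₁}. Then there exists H₁ ∈ C¹(X₁,ℝ) such that H₁(x₁) = H(x₁,x₂) and ∇H₁(x₁) = ∇_{x₁} H(x₁,x₂) for all (x₁,x₂) ∈ X, and moreover ∇H₁(x₁) = E₁₁(x₁,x₂)ᵀ z₁(x₁,x₂) holds for all (x₁,x₂) ∈ X. -/

import Mathlib

open Matrix Set

noncomputable def grad {n : ℕ} (f : (Fin n → ℝ) → ℝ) (x : Fin n → ℝ) : Fin n → ℝ :=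
  fun i => fderiv ℝ f x (Pi.single i 1)

noncomputable def grad1 {n1 n2 : ℕ} (f : ((Fin n1 → ℝ) × (Fin n2 → ℝ)) → ℝ)
    (x : (Fin n1 → ℝ) × (Fin n2 → ℝ)) : Fin n1 → ℝ :=
  fun i => fderiv ℝ f x (Pi.single i 1, 0)

noncomputable def grad2 {n1 n2 : ℕ} (f : ((Fin n1 → ℝ) × (Fin n2 → ℝ)) → ℝ)
    (x : (Fin n1 → ℝ) × (Fin n2 → ℝ)) : Fin n2 → ℝ :=
  fun j => fderiv ℝ f x (0, Pi.single j 1)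

/-- a semi-explicit gradient pair `(E, z)` with `E = diag(E₁₁, 0)` admits a
specified Hamiltonian `H₁`, and the gradient pair property reduces to
`∇H₁(x₁) = E₁₁(x₁,x₂)ᵀ z₁(x₁,x₂)`. -/
theorem semiExplicit_gradient_pair_specified_Hamiltonian {n1 n2 : ℕ}
    (X1 : Set (Fin n1 → ℝ)) (X2 : Set (Fin n2 → ℝ))
    (hX1 : IsOpen X1) (hX2 : IsOpen X2) (hX2conv : Convex ℝ X2)
    (H : ((Fin n1 → ℝ) × (Fin n2 → ℝ)) → ℝ)
    (hH : ContDiffOn ℝ 1 H (X1 ×ˢ X2))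
    (E11 : ((Fin n1 → ℝ) × (Fin n2 → ℝ)) → Matrix (Fin n1) (Fin n1) ℝ)
    (hE11cont : ContinuousOn E11 (X1 ×ˢ X2))
    (hE11inv : ∀ x ∈ X1 ×ˢ X2, IsUnit (E11 x).det)
    (z1 : ((Fin n1 → ℝ) × (Fin n2 → ℝ)) → (Fin n1 → ℝ))
    (z2 : ((Fin n1 → ℝ) × (Fin n2 → ℝ)) → (Fin n2 → ℝ))
    (hzcont : ContinuousOn (fun x => (z1 x, z2 x)) (X1 ×ˢ X2))
    (hgradpair : ∀ x ∈ X1 ×ˢ X2,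
      (Matrix.fromBlocks (E11 x) 0 0 0 : Matrix (Fin n1 ⊕ Fin n2) (Fin n1 ⊕ Fin n2) ℝ)ᵀ.mulVec
          (Sum.elim (z1 x) (z2 x))
        = Sum.elim (grad1 H x) (grad2 H x)) :
    ∃ H1 : (Fin n1 → ℝ) → ℝ, ContDiffOn ℝ 1 H1 X1 ∧
      ∀ x1 ∈ X1, ∀ x2 ∈ X2,
        H1 x1 = H (x1, x2) ∧
        grad H1 x1 = grad1 H (x1, x2) ∧
        grad H1 x1 = (E11 (x1, x2))ᵀ.mulVec (z1 (x1, x2)) := by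
  rcases X2.eq_empty_or_nonempty with h2e | ⟨x20, hx20⟩
  · exact ⟨fun _ => 0, contDiffOn_const, fun x1 _ x2 hx2 => by simp [h2e] at hx2⟩
  have hopen : IsOpen (X1 ×ˢ X2) := hX1.prod hX2
  have hHd : ∀ x ∈ X1 ×ˢ X2, DifferentiableAt ℝ H x := fun x hx =>
    (hH.contDiffAt (hopen.mem_nhds hx)).differentiableAt one_ne_zero
  -- inr component : grad2 H = 0
  have hg2 : ∀ x ∈ X1 ×ˢ X2, grad2 H x = 0 := by
    intro x hx
    funext j
    have := congrFun (hgradpair x hx) (Sum.inr j)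
    simpa [Matrix.fromBlocks_transpose, Matrix.fromBlocks_mulVec] using this.symm
  -- inl component
  have hg1 : ∀ x ∈ X1 ×ˢ X2, grad1 H x = (E11 x)ᵀ.mulVec (z1 x) := by
    intro x hx
    funext i
    have := congrFun (hgradpair x hx) (Sum.inl i)
    simpa [Matrix.fromBlocks_transpose, Matrix.fromBlocks_mulVec] using this.symm
  -- derivative in x2 directions vanishes
  have hd2 : ∀ x ∈ X1 ×ˢ X2, ∀ v : Fin n2 → ℝ, fderiv ℝ H x (0, v) = 0 := by
    intro x hx v
    have hv : ((0, v) : (Fin n1 → ℝ) × (Fin n2 → ℝ))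
        = ∑ j, v j • ((0, Pi.single j 1) : (Fin n1 → ℝ) × (Fin n2 → ℝ)) := by
      rw [Prod.ext_iff]
      constructor
      · simp [Prod.fst_sum]
      · simp only [Prod.snd_sum, Prod.smul_snd]
        funext k
        simp [Pi.single_apply, Finset.sum_apply, mul_comm]
    have hz : ∀ j, fderiv ℝ H x (0, Pi.single j 1) = 0 := fun j => congrFun (hg2 x hx) j
    rw [hv, map_sum]
    refine Finset.sum_eq_zero fun j _ => ?_
    rw [(fderiv ℝ H x).map_smul, hz j, smul_zero]
  -- H is constant in the second variable
  have key : ∀ x1 ∈ X1, ∀ y2 ∈ X2, ∀ y2' ∈ X2, H (x1, y2) = H (x1, y2') := by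
    intro x1 hx1 y2 hy2 y2' hy2'
    set g : (Fin n2 → ℝ) → ℝ := fun y => H (x1, y) with hg
    have hgd : ∀ y ∈ X2, HasFDerivAt g (0 : (Fin n2 → ℝ) →L[ℝ] ℝ) y := by
      intro y hy
      have hmem : ((x1, y) : _) ∈ X1 ×ˢ X2 := ⟨hx1, hy⟩
      have hc : HasFDerivAt (fun y : Fin n2 → ℝ => ((x1, y) : (Fin n1 → ℝ) × (Fin n2 → ℝ)))
          ((ContinuousLinearMap.inr ℝ (Fin n1 → ℝ) (Fin n2 → ℝ))) y :=
        HasFDerivAt.prodMk (hasFDerivAt_const x1 y) (hasFDerivAt_id y)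
      have hcomp := ((hHd _ hmem).hasFDerivAt).comp y hc
      refine hcomp.congr_fderiv ?_
      refine ContinuousLinearMap.ext fun v => ?_
      exact hd2 _ hmem v
    have hdiff : DifferentiableOn ℝ g X2 := fun y hy =>
      ((hgd y hy).differentiableAt).differentiableWithinAt
    have hfw : ∀ y ∈ X2, fderivWithin ℝ g X2 y = 0 := by
      intro y hy
      rw [fderivWithin_of_isOpen hX2 hy]
      exact (hgd y hy).fderiv
    exact hX2conv.is_const_of_fderivWithin_eq_zero hdiff hfw hy2 hy2'
  refine ⟨fun y1 => H (y1, x20), ?_, ?_⟩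
  · exact hH.comp ((contDiff_id.prodMk contDiff_const).contDiffOn) (fun y1 h => ⟨h, hx20⟩)
  intro x1 hx1 x2 hx2
  have hmem : ((x1, x2) : _) ∈ X1 ×ˢ X2 := ⟨hx1, hx2⟩
  have heq1 : H (x1, x20) = H (x1, x2) := key x1 hx1 x20 hx20 x2 hx2
  -- derivative of H1
  set L := fderiv ℝ H (x1, x2) with hL
  have hc : HasFDerivAt (fun y : Fin n1 → ℝ => ((y, x2) : (Fin n1 → ℝ) × (Fin n2 → ℝ)))
      ((ContinuousLinearMap.inl ℝ (Fin n1 → ℝ) (Fin n2 → ℝ))) x1 :=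
    HasFDerivAt.prodMk (hasFDerivAt_id x1) (hasFDerivAt_const x2 x1)
  have hcomp : HasFDerivAt (fun y : Fin n1 → ℝ => H (y, x2))
      (L.comp (ContinuousLinearMap.inl ℝ (Fin n1 → ℝ) (Fin n2 → ℝ))) x1 :=
    ((hHd _ hmem).hasFDerivAt).comp x1 hc
  have heq : (fun y1 => H (y1, x20)) =ᶠ[nhds x1] (fun y1 => H (y1, x2)) := by
    filter_upwards [hX1.mem_nhds hx1] with y1 hy1
    exact key y1 hy1 x20 hx20 x2 hx2
  have hH1d : HasFDerivAt (fun y1 => H (y1, x20))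
      (L.comp (ContinuousLinearMap.inl ℝ (Fin n1 → ℝ) (Fin n2 → ℝ))) x1 :=
    hcomp.congr_of_eventuallyEq heq
  have hgradH1 : grad (fun y1 => H (y1, x20)) x1 = grad1 H (x1, x2) := by
    funext i
    rw [grad, hH1d.fderiv]
    rfl
  exact ⟨heq1, hgradH1, hgradH1.trans (hg1 _ hmem)⟩
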